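/- The Myerson interaction index satisfies graph null player: if i is a graph null player in (N, v, Γ), then MI^{v,Γ}(S ∪ {i}) = 0 for all S ⊆ N∖{i} (including S = ∅, assuming v({i}) = 0). -/

import Mathlib

open Finset

noncomputable section
open scoped Classical

namespace TUGame

variable {ι : Type*} [Fintype ι] [DecidableEq ι]

/-- Harsanyi dividend of coalition `T` in game `v`. -/
def dividend (v : Finset ι → ℝ) (T : Finset ι) : ℝ :=
  ∑ R ∈ T.powerset, (-1 : ℝ) ^ (T.card - R.card) * v R

/-- Unanimity game of coalition `T`. -/
def unanimity (T S : Finset ι) : ℝ := if T ⊆ S then 1 else 0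

/-- Shapley value of player `i` in game `v`. -/
def shapley (v : Finset ι → ℝ) (i : ι) : ℝ :=
  ∑ S ∈ Finset.univ.powerset.filter (fun S => i ∈ S),
    (((S.card - 1).factorial * (Fintype.card ι - S.card).factorial : ℕ) : ℝ) /
      (((Fintype.card ι).factorial : ℕ) : ℝ) * (v S - v (S.erase i))

/-- Shapley interaction index, defined via discrete derivatives. -/
def SIderiv (v : Finset ι → ℝ) (S : Finset ι) : ℝ :=
  ∑ T ∈ (Finset.univ \ S).powerset,
    (((Fintype.card ι - T.card - S.card).factorial * T.card.factorial : ℕ) : ℝ) /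
      (((Fintype.card ι - S.card + 1).factorial : ℕ) : ℝ) *
    ∑ L ∈ S.powerset, (-1 : ℝ) ^ (S.card - L.card) * v (T ∪ L)

/-- Shapley interaction index, expressed via Harsanyi dividends. -/
def SIdiv (v : Finset ι → ℝ) (S : Finset ι) : ℝ :=
  ∑ T ∈ Finset.univ.powerset.filter (fun T => S ⊆ T),
    dividend v T / ((T.card - S.card + 1 : ℕ) : ℝ)

/-- The subgraph of `G` induced by the coalition `S` (as a graph on the same vertex set). -/
def restrict (G : SimpleGraph ι) (S : Finset ι) : SimpleGraph ι where
  Adj i j := G.Adj i j ∧ i ∈ S ∧ j ∈ S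
  symm := ⟨fun i j h => ⟨G.symm.symm _ _ h.1, h.2.2, h.2.1⟩⟩
  loopless := ⟨fun i h => G.loopless.irrefl i h.1⟩

/-- Connected component of `i` in the subgraph induced by `S`. -/
def comp (G : SimpleGraph ι) (S : Finset ι) (i : ι) : Finset ι :=
  S.filter fun j => (restrict G S).Reachable i j

/-- Connected component of `i` in `G`. -/
def component (G : SimpleGraph ι) (i : ι) : Finset ι := comp G Finset.univ i

/-- Myerson graph-restricted game: sum of `v` over the connected components
of the subgraph induced by `S`. -/
def restrictedGame (G : SimpleGraph ι) (v : Finset ι → ℝ) (S : Finset ι) : ℝ :=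
  ∑ C ∈ S.image (comp G S), v C

/-- Myerson interaction index. -/
def MI (G : SimpleGraph ι) (v : Finset ι → ℝ) (S : Finset ι) : ℝ :=
  SIdiv (restrictedGame G v) S

/-- The subgraph induced by `S` is connected. -/
def ConnectedOn (G : SimpleGraph ι) (S : Finset ι) : Prop :=
  ∀ i ∈ S, ∀ j ∈ S, (restrict G S).Reachable i j

/-- `R` is a minimal `T`-connecting set of nodes in `G`. -/
def MinimalConnecting (G : SimpleGraph ι) (T R : Finset ι) : Prop :=
  T ⊆ R ∧ ConnectedOn G R ∧ ∀ R' ⊂ R, ¬ (T ⊆ R' ∧ ConnectedOn G R')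

/-- `i` is an intermediary of `T` in `G`. -/
def Intermediary (G : SimpleGraph ι) (T : Finset ι) (i : ι) : Prop :=
  ∃ R, MinimalConnecting G T R ∧ i ∈ R ∧ i ∉ T

/-- `i` is an essential intermediary of `T` in `G`. -/
def EssentialIntermediary (G : SimpleGraph ι) (T : Finset ι) (i : ι) : Prop :=
  i ∉ T ∧ ∀ R, MinimalConnecting G T R → i ∈ R

/-- `i` is a null player in game `v`. -/
def NullPlayer (v : Finset ι → ℝ) (i : ι) : Prop :=
  ∀ S : Finset ι, i ∉ S → v (insert i S) = v S

/-- `i` is a graph null player in the communication situation `(N, v, G)`. -/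
def GraphNull (G : SimpleGraph ι) (v : Finset ι → ℝ) (i : ι) : Prop :=
  NullPlayer v i ∧
    ∀ j k : ι, j ≠ k → j ≠ i → k ≠ i → Intermediary G {j, k} i →
      NullPlayer v j ∨ NullPlayer v k

/-- `P` is a veto partnership in game `v`. -/
def VetoPartnership (v : Finset ι → ℝ) (P : Finset ι) : Prop :=
  P.Nonempty ∧ ∀ T : Finset ι, T ⊆ Finset.univ \ P →
    v T = 0 ∧ ∀ S ⊂ P, v (T ∪ S) = 0

/-- `GP` is a veto graph partnership in `(N, v, G)`. -/
def VetoGraphPartnership (G : SimpleGraph ι) (v : Finset ι → ℝ) (GP : Finset ι) : Prop :=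
  GP.Nonempty ∧ ∃ P, VetoPartnership v P ∧
    ∀ i ∈ GP, i ∈ P ∨ EssentialIntermediary G P i

/-- Cutnodes of `S`: nodes of `S` whose removal disconnects the induced subgraph on `S`. -/
def cutnodes (G : SimpleGraph ι) (S : Finset ι) : Finset ι :=
  S.filter fun i => ¬ ConnectedOn G (S.erase i)

/-! ### Auxiliary lemmas -/

lemma restrict_mono (G : SimpleGraph ι) {S T : Finset ι} (h : S ⊆ T) :
    restrict G S ≤ restrict G T :=
  fun _ _ hab => ⟨hab.1, h hab.2.1, h hab.2.2⟩

lemma walk_support_mem {G : SimpleGraph ι} {S : Finset ι} {a b : ι}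
    (p : (restrict G S).Walk a b) (ha : a ∈ S) : ∀ u ∈ p.support, u ∈ S := by
  induction p with
  | nil =>
    intro u hu
    simp only [SimpleGraph.Walk.support_nil, List.mem_singleton] at hu
    exact hu ▸ ha
  | @cons x y z hadj q ih =>
    intro u hu
    rw [SimpleGraph.Walk.support_cons, List.mem_cons] at hu
    rcases hu with rfl | hu
    · exact ha
    · exact ih hadj.2.2 u hu

lemma walk_reach_support {G : SimpleGraph ι} {S : Finset ι} {a b : ι}
    (p : (restrict G S).Walk a b) : ∀ u ∈ p.support, (restrict G S).Reachable a u := by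
  induction p with
  | nil =>
    intro u hu
    simp only [SimpleGraph.Walk.support_nil, List.mem_singleton] at hu
    subst hu
    exact SimpleGraph.Reachable.refl _
  | @cons x y z hadj q ih =>
    intro u hu
    rw [SimpleGraph.Walk.support_cons, List.mem_cons] at hu
    rcases hu with rfl | hu
    · exact SimpleGraph.Reachable.refl u
    · exact (hadj.reachable).trans (ih u hu)

lemma walk_transfer {G : SimpleGraph ι} {S R : Finset ι} {a b : ι}
    (p : (restrict G S).Walk a b) (hp : ∀ u ∈ p.support, u ∈ R) :
    (restrict G R).Reachable a b := by
  induction p with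
  | nil => exact SimpleGraph.Reachable.refl _
  | @cons x y z hadj q ih =>
    have hx : x ∈ R := hp x (by rw [SimpleGraph.Walk.support_cons]; exact List.mem_cons_self)
    have hy : y ∈ R := hp y (by
      rw [SimpleGraph.Walk.support_cons]
      exact List.mem_cons_of_mem _ q.start_mem_support)
    have : (restrict G R).Adj x y := ⟨hadj.1, hx, hy⟩
    exact this.reachable.trans (ih fun u hu => hp u (by
      rw [SimpleGraph.Walk.support_cons]; exact List.mem_cons_of_mem _ hu))

lemma mem_comp_iff {G : SimpleGraph ι} {S : Finset ι} {j k : ι} :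
    k ∈ comp G S j ↔ k ∈ S ∧ (restrict G S).Reachable j k := by
  simp [comp]

lemma mem_comp_self {G : SimpleGraph ι} {S : Finset ι} {j : ι} (hj : j ∈ S) :
    j ∈ comp G S j :=
  mem_comp_iff.mpr ⟨hj, SimpleGraph.Reachable.refl j⟩

lemma comp_subset {G : SimpleGraph ι} {S : Finset ι} {j : ι} : comp G S j ⊆ S :=
  filter_subset _ _

lemma comp_congr {G : SimpleGraph ι} {S : Finset ι} {j k : ι}
    (hk : k ∈ comp G S j) : comp G S k = comp G S j := by
  obtain ⟨-, hreach⟩ := mem_comp_iff.mp hk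
  ext x
  simp only [mem_comp_iff]
  exact ⟨fun ⟨hx, hr⟩ => ⟨hx, hreach.trans hr⟩, fun ⟨hx, hr⟩ => ⟨hx, hreach.symm.trans hr⟩⟩

/-- Stripping null players off a coalition. -/
lemma strip_null (v : Finset ι → ℝ) {B : Finset ι} (hB : ∀ j ∈ B, NullPlayer v j) :
    ∀ T : Finset ι, Disjoint B T → v (B ∪ T) = v T := by
  induction B using Finset.induction with
  | empty => intro T _; rw [empty_union]
  | @insert b B' hb ih =>
    intro T hdisj
    rw [insert_union]
    have hbT : b ∉ B' ∪ T := by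
      intro hmem
      rcases mem_union.mp hmem with h1 | h1
      · exact hb h1
      · exact (Finset.disjoint_left.mp hdisj (mem_insert_self b B')) h1
    rw [hB b (mem_insert_self b B') _ hbT]
    exact ih (fun j hj => hB j (mem_insert_of_mem hj)) T
      (Finset.disjoint_of_subset_left (subset_insert b B') hdisj)

/-- The dividend of any coalition containing a null player vanishes. -/
lemma dividend_eq_zero_of_null {w : Finset ι → ℝ} {i : ι} (hi : NullPlayer w i)
    {T : Finset ι} (hiT : i ∈ T) : dividend w T = 0 := by
  have hT : T = insert i (T.erase i) := (insert_erase hiT).symm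
  rw [dividend, hT, Finset.sum_powerset_insert (notMem_erase i T)]
  rw [← Finset.sum_add_distrib]
  apply Finset.sum_eq_zero
  intro R hR
  have hiR : i ∉ R := fun hmem => notMem_erase i T (mem_powerset.mp hR hmem)
  have hw : w (insert i R) = w R := hi R hiR
  have hcard : (insert i R).card = R.card + 1 := card_insert_of_notMem hiR
  have hcardT : (insert i (T.erase i)).card = (T.erase i).card + 1 :=
    card_insert_of_notMem (notMem_erase i T)
  have hRcard : R.card ≤ (T.erase i).card := card_le_card (mem_powerset.mp hR)
  rw [hw, hcard, hcardT]
  have h1 : (T.erase i).card + 1 - R.card = ((T.erase i).card - R.card) + 1 := by omega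
  have h2 : (T.erase i).card + 1 - (R.card + 1) = (T.erase i).card - R.card := by omega
  rw [h1, h2, pow_succ]
  ring

/-- `i` is a null player in the graph-restricted game. -/
lemma restrictedGame_null (G : SimpleGraph ι) (v : Finset ι → ℝ) {i : ι}
    (h : GraphNull G v i) (hvi : v {i} = 0) :
    NullPlayer (restrictedGame G v) i := by
  intro S hiS
  set S' : Finset ι := insert i S with hS'
  have hv0 : v ∅ = 0 := by
    have := h.1 ∅ (notMem_empty i)
    simp only [insert_empty_eq] at this
    rw [← this, hvi]
  set A : Finset ι := S.filter (fun j => (restrict G S').Reachable i j) with hA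
  have hAS : A ⊆ S := filter_subset _ _
  have hiA : i ∉ A := fun hmem => hiS (hAS hmem)
  have hiS' : i ∈ S' := mem_insert_self i S
  -- the component of i in S'
  have hcompi : comp G S' i = insert i A := by
    ext x
    simp only [mem_comp_iff, hA, mem_filter, mem_insert, hS']
    constructor
    · rintro ⟨hx | hx, hr⟩
      · exact Or.inl hx
      · exact Or.inr ⟨hx, hr⟩
    · rintro (rfl | ⟨hx, hr⟩)
      · exact ⟨Or.inl rfl, SimpleGraph.Reachable.refl x⟩
      · exact ⟨Or.inr hx, hr⟩
  -- A is closed under S-components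
  have hAclosed : ∀ j ∈ A, ∀ k ∈ comp G S j, k ∈ A := by
    intro j hj k hk
    obtain ⟨hkS, hr⟩ := mem_comp_iff.mp hk
    have hjr : (restrict G S').Reachable i j := (mem_filter.mp hj).2
    exact mem_filter.mpr ⟨hkS,
      hjr.trans (hr.mono (restrict_mono G (subset_insert i S)))⟩
  have hAclosed' : ∀ j ∈ S, j ∉ A → ∀ k ∈ comp G S j, k ∉ A := by
    intro j hjS hj k hk hkA
    have : j ∈ comp G S k := by
      obtain ⟨hkS, hr⟩ := mem_comp_iff.mp hk
      exact mem_comp_iff.mpr ⟨hjS, hr.symm⟩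
    exact hj (hAclosed k hkA j this)
  -- components of S' for j ∉ A equal components of S
  have hcomp_eq : ∀ j ∈ S, j ∉ A → comp G S' j = comp G S j := by
    intro j hjS hjA
    have hnri : ¬ (restrict G S').Reachable i j := fun hr => hjA (mem_filter.mpr ⟨hjS, hr⟩)
    ext x
    simp only [mem_comp_iff]
    constructor
    · rintro ⟨hxS', hr⟩
      obtain ⟨p⟩ := hr
      have hsupp : ∀ u ∈ p.support, u ∈ S := by
        intro u hu
        have huS' : u ∈ S' := walk_support_mem p (mem_insert_of_mem hjS) u hu
        rcases mem_insert.mp huS' with rfl | huS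
        · exact absurd ((walk_reach_support p u hu).symm) hnri
        · exact huS
      exact ⟨hsupp x p.end_mem_support, walk_transfer p hsupp⟩
    · rintro ⟨hxS, hr⟩
      exact ⟨mem_insert_of_mem hxS,
        hr.mono (restrict_mono G (subset_insert i S))⟩
  -- components of S' for j ∈ A all equal comp G S' i
  have hcomp_A : ∀ j ∈ A, comp G S' j = comp G S' i := by
    intro j hj
    exact comp_congr (mem_comp_iff.mpr ⟨mem_insert_of_mem (hAS hj), (mem_filter.mp hj).2⟩)
  set Ci : Finset ι := insert i A with hCi
  set B : Finset (Finset ι) := (S \ A).image (comp G S) with hB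
  set D : Finset (Finset ι) := A.image (comp G S) with hD
  -- image decomposition for S'
  have himg' : S'.image (comp G S') = insert Ci B := by
    ext C
    simp only [mem_image, mem_insert, hB, mem_sdiff]
    constructor
    · rintro ⟨j, hj, rfl⟩
      rcases mem_insert.mp hj with rfl | hjS
      · exact Or.inl (by rw [hcompi])
      · by_cases hjA : j ∈ A
        · exact Or.inl (by rw [hcomp_A j hjA, hcompi])
        · exact Or.inr ⟨j, ⟨hjS, hjA⟩, (hcomp_eq j hjS hjA).symm ▸ rfl⟩
    · rintro (rfl | ⟨j, ⟨hjS, hjA⟩, rfl⟩)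
      · exact ⟨i, mem_insert_self i S, by rw [hcompi]⟩
      · exact ⟨j, mem_insert_of_mem hjS, hcomp_eq j hjS hjA⟩
  -- image decomposition for S
  have himg : S.image (comp G S) = D ∪ B := by
    rw [hD, hB, ← Finset.image_union, union_sdiff_of_subset hAS]
  -- disjointness facts
  have hDB : Disjoint D B := by
    rw [Finset.disjoint_left]
    rintro C hCD hCB
    obtain ⟨j, hjA, rfl⟩ := mem_image.mp hCD
    obtain ⟨k, hk, hCk⟩ := mem_image.mp hCB
    have hkS := (mem_sdiff.mp hk).1
    have hkA := (mem_sdiff.mp hk).2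
    have : k ∈ comp G S j := hCk ▸ mem_comp_self hkS
    exact hkA (hAclosed j hjA k this)
  have hCiB : Ci ∉ B := by
    intro hmem
    obtain ⟨j, _, hCj⟩ := mem_image.mp hmem
    have : i ∈ comp G S j := hCj ▸ mem_insert_self i A
    exact hiS (comp_subset this)
  -- key cancellation: v Ci = ∑ C in D, v C
  have hkey : v Ci = ∑ C ∈ D, v C := by
    by_cases hAne : A.Nonempty
    · -- choose a distinguished component D0 containing all non-null players
      have hpair : ∀ j ∈ A, ∀ k ∈ A, comp G S j ≠ comp G S k →
          NullPlayer v j ∨ NullPlayer v k := by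
        intro j hj k hk hne
        have hjS := hAS hj
        have hkS := hAS hk
        have hjk : j ≠ k := by rintro rfl; exact hne rfl
        have hji : j ≠ i := fun hji => hiS (hji ▸ hjS)
        have hki : k ≠ i := fun hki => hiS (hki ▸ hkS)
        apply h.2 j k hjk hji hki
        -- build a minimal connecting set for {j,k} inside Ci
        have hconnCi : ConnectedOn G Ci := by
          intro a ha b hb
          have hra : (restrict G S').Reachable i a := by
            rcases mem_insert.mp ha with rfl | haA
            · exact SimpleGraph.Reachable.refl a
            · exact (mem_filter.mp haA).2
          have hrb : (restrict G S').Reachable i b := by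
            rcases mem_insert.mp hb with rfl | hbA
            · exact SimpleGraph.Reachable.refl b
            · exact (mem_filter.mp hbA).2
          obtain ⟨p⟩ := hra.symm.trans hrb
          apply walk_transfer p
          intro u hu
          have huS' : u ∈ S' := walk_support_mem p
            (by rcases mem_insert.mp ha with rfl | haA
                · exact hiS'
                · exact mem_insert_of_mem (hAS haA)) u hu
          have hru : (restrict G S').Reachable i u :=
            hra.trans (walk_reach_support p u hu)
          rcases mem_insert.mp huS' with rfl | huS
          · exact mem_insert_self u A
          · exact mem_insert_of_mem (mem_filter.mpr ⟨huS, hru⟩)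
        have hjCi : j ∈ Ci := mem_insert_of_mem hj
        have hkCi : k ∈ Ci := mem_insert_of_mem hk
        set cand : Finset (Finset ι) :=
          Ci.powerset.filter (fun R => ({j, k} : Finset ι) ⊆ R ∧ ConnectedOn G R) with hcand
        have hCimem : Ci ∈ cand := mem_filter.mpr ⟨mem_powerset_self Ci,
          insert_subset hjCi (singleton_subset_iff.mpr hkCi), hconnCi⟩
        obtain ⟨R, hRmem, hRmin⟩ :=
          Finset.exists_min_image cand Finset.card ⟨Ci, hCimem⟩
        have hRr := mem_filter.mp hRmem
        have hRCi : R ⊆ Ci := mem_powerset.mp hRr.1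
        have hjkR : ({j, k} : Finset ι) ⊆ R := hRr.2.1
        have hRconn : ConnectedOn G R := hRr.2.2
        have hiR : i ∈ R := by
          by_contra hiR
          have hRS : R ⊆ S := fun x hx => by
            rcases mem_insert.mp (hRCi hx) with rfl | hxA
            · exact absurd hx hiR
            · exact hAS hxA
          have hjR : j ∈ R := hjkR (mem_insert_self j {k})
          have hkR : k ∈ R := hjkR (mem_insert_of_mem (mem_singleton_self k))
          have hr : (restrict G S).Reachable j k :=
            (hRconn j hjR k hkR).mono (restrict_mono G hRS)
          exact hne (comp_congr (mem_comp_iff.mpr ⟨hkS, hr⟩)).symm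
        refine ⟨R, ⟨hjkR, hRconn, ?_⟩, hiR, ?_⟩
        · intro R' hR' ⟨hjkR', hR'conn⟩
          have hR'mem : R' ∈ cand := mem_filter.mpr
            ⟨mem_powerset.mpr (hR'.subset.trans hRCi), hjkR', hR'conn⟩
          exact absurd (hRmin R' hR'mem) (not_le.mpr (card_lt_card hR'))
        · simp only [mem_insert, mem_singleton]
          rintro (rfl | rfl)
          · exact hji rfl
          · exact hki rfl
      -- find D0
      obtain ⟨j0, hj0A, hj0⟩ : ∃ j0 ∈ A, ∀ k ∈ A, ¬ NullPlayer v k → k ∈ comp G S j0 := by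
        by_cases hex : ∃ j ∈ A, ¬ NullPlayer v j
        · obtain ⟨j, hjA, hjn⟩ := hex
          refine ⟨j, hjA, fun k hkA hkn => ?_⟩
          by_contra hkc
          have hne : comp G S j ≠ comp G S k := by
            intro heq
            exact hkc (heq ▸ mem_comp_self (hAS hkA))
          rcases hpair j hjA k hkA hne with h1 | h1
          · exact hjn h1
          · exact hkn h1
        · push_neg at hex
          obtain ⟨j, hjA⟩ := hAne
          exact ⟨j, hjA, fun k hkA hkn => absurd (hex k hkA) hkn⟩
      set D0 : Finset ι := comp G S j0 with hD0
      have hD0A : D0 ⊆ A := fun x hx => hAclosed j0 hj0A x hx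
      have hD0D : D0 ∈ D := mem_image.mpr ⟨j0, hj0A, rfl⟩
      have hnull_out : ∀ x ∈ A, x ∉ D0 → NullPlayer v x := by
        intro x hxA hxD0
        by_contra hxn
        exact hxD0 (hj0 x hxA hxn)
      -- v Ci = v D0
      have hCival : v Ci = v D0 := by
        have hsplit : Ci = (insert i (A \ D0)) ∪ D0 := by
          rw [hCi, insert_union, sdiff_union_of_subset hD0A]
        rw [hsplit]
        apply strip_null
        · intro x hx
          rcases mem_insert.mp hx with rfl | hx
          · exact h.1
          · exact hnull_out x (mem_sdiff.mp hx).1 (mem_sdiff.mp hx).2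
        · rw [Finset.disjoint_left]
          intro x hx hxD0
          rcases mem_insert.mp hx with rfl | hx
          · exact hiS (comp_subset hxD0)
          · exact (mem_sdiff.mp hx).2 hxD0
      -- v C = 0 for C in D, C ≠ D0
      have hother : ∀ C ∈ D, C ≠ D0 → v C = 0 := by
        intro C hCD hCne
        obtain ⟨k, hkA, rfl⟩ := mem_image.mp hCD
        have hnull : ∀ x ∈ comp G S k, NullPlayer v x := by
          intro x hx
          have hxA : x ∈ A := hAclosed k hkA x hx
          apply hnull_out x hxA
          intro hxD0
          exact hCne ((comp_congr hx).symm.trans (comp_congr hxD0))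
        have := strip_null v hnull ∅ (disjoint_empty_right _)
        rw [union_empty] at this
        rw [this, hv0]
      rw [hCival, ← Finset.sum_eq_single_of_mem D0 hD0D (fun C hC hne => hother C hC hne)]
    · -- A empty
      rw [not_nonempty_iff_eq_empty] at hAne
      rw [hCi, hD, hAne]
      simp [hvi]
  -- put it together
  rw [restrictedGame, restrictedGame, himg', himg,
    Finset.sum_insert hCiB, Finset.sum_union hDB, hkey]

end TUGame

open TUGame

/-- the Myerson interaction index satisfies the graph null player
property. -/
theorem MI_graphNull {ι : Type*} [Fintype ι] [DecidableEq ι]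
    (G : SimpleGraph ι) (v : Finset ι → ℝ) (i : ι)
    (h : GraphNull G v i) (hvi : v {i} = 0) :
    ∀ S : Finset ι, i ∉ S → MI G v (insert i S) = 0 := by
  intro S _
  have hnull : NullPlayer (restrictedGame G v) i := restrictedGame_null G v h hvi
  rw [MI, SIdiv]
  apply Finset.sum_eq_zero
  intro T hT
  have hiT : i ∈ T := (Finset.mem_filter.mp hT).2 (Finset.mem_insert_self i S)
  rw [dividend_eq_zero_of_null hnull hiT, zero_div]
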